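/- Let x_1,...,x_d be linearly independent vectors in a finite-dimensional inner product space with positive definite Gram matrix. Fix j; if T_1 and T_2 are subsets of [d]\{j} such that the orthogonal projection of x_j onto span(x_{T_1}) equals the orthogonal projection of x_j onto span(x_{T_2}), then the projection of x_j onto span(x_{T_1 ∩ T_2}) also equals this common value. -/

import Mathlib

theorem stmt_9 {H : Type*} [NormedAddCommGroup H] [InnerProductSpace ℝ H]
    [FiniteDimensional ℝ H]
    {d : ℕ} (x : Fin d → H) (hx : LinearIndependent ℝ x)
    (j : Fin d) (T₁ T₂ : Finset (Fin d)) (h1 : j ∉ T₁) (h2 : j ∉ T₂)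
    (h : (Submodule.orthogonalProjection (Submodule.span ℝ (x '' ↑T₁)) (x j) : H)
       = (Submodule.orthogonalProjection (Submodule.span ℝ (x '' ↑T₂)) (x j) : H)) :
    (Submodule.orthogonalProjection (Submodule.span ℝ (x '' ↑(T₁ ∩ T₂))) (x j) : H)
       = (Submodule.orthogonalProjection (Submodule.span ℝ (x '' ↑T₁)) (x j) : H) := by
  set K₁ := Submodule.span ℝ (x '' ↑T₁) with hK₁
  set K₂ := Submodule.span ℝ (x '' ↑T₂) with hK₂
  set K := Submodule.span ℝ (x '' ↑(T₁ ∩ T₂)) with hK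
  set p : H := (Submodule.orthogonalProjection K₁ (x j) : H) with hp
  have hpK₁ : p ∈ K₁ := (Submodule.orthogonalProjection K₁ (x j)).2
  have hpK₂ : p ∈ K₂ := h ▸ (Submodule.orthogonalProjection K₂ (x j)).2
  have hKle : K ≤ K₁ := Submodule.span_mono (Set.image_mono (by
    intro a ha
    simp only [Finset.coe_inter, Set.mem_inter_iff] at ha
    exact ha.1))
  -- decompose K₁ as K ⊔ span of the difference
  have hsplit : K₁ = K ⊔ Submodule.span ℝ (x '' ↑(T₁ \ T₂)) := by
    have hset : (↑T₁ : Set (Fin d)) = ↑(T₁ ∩ T₂) ∪ ↑(T₁ \ T₂) := by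
      ext a
      simp only [Finset.coe_inter, Finset.coe_sdiff, Set.mem_union, Set.mem_inter_iff,
        Set.mem_diff, Finset.mem_coe]
      tauto
    rw [hK, hK₁, hset, Set.image_union, Submodule.span_union]
  have hpmem : p ∈ K ⊔ Submodule.span ℝ (x '' ↑(T₁ \ T₂)) := hsplit ▸ hpK₁
  obtain ⟨a, haK, b, hbD, hab⟩ := Submodule.mem_sup.mp hpmem
  have hbK₂ : b ∈ K₂ := by
    have : b = p - a := by rw [← hab]; abel
    rw [this]
    exact K₂.sub_mem hpK₂ (by
      have : K ≤ K₂ := Submodule.span_mono (Set.image_mono (by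
        intro c hc
        simp only [Finset.coe_inter, Set.mem_inter_iff] at hc
        exact hc.2))
      exact this haK)
  have hdisj : Disjoint (Submodule.span ℝ (x '' ↑(T₁ \ T₂))) K₂ :=
    hx.disjoint_span_image (by
      rw [Set.disjoint_left]
      intro c hc
      simp only [Finset.coe_sdiff, Set.mem_diff, Finset.mem_coe] at hc ⊢
      exact hc.2)
  have hb0 : b = 0 := Submodule.disjoint_def.mp hdisj b hbD hbK₂
  have hpK : p ∈ K := by rw [← hab, hb0, add_zero]; exact haK
  have e := Submodule.eq_starProjection_of_mem_orthogonal (K := K) (u := x j) hpK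
    (Submodule.orthogonal_le hKle (by exact
      K₁.sub_starProjection_mem_orthogonal (x j)))
  exact e
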